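/- Representer theorem: let H be a reproducing kernel Hilbert space on a set P with kernel k, let μ₁,…,μ_N ∈ P, y₁,…,y_N ∈ ℝ, and λ > 0. Then any minimizer f* ∈ H of L(f) = (1/N) Σ_{i=1}^N (y_i − f(μ_i))² + λ‖f‖²_H lies in span{k(·,μ_i) : i = 1,…,N}. -/

import Mathlib

open scoped RealInnerProductSpace

/-- Representer theorem: any minimizer of the regularized mean-squared-error loss in an RKHS
lies in the span of the kernel translates at the data points. Here `H` is a Hilbert space of
functions on `P` (realized via the linear evaluation map `e`) with reproducing kernel given by
the feature map `K`, i.e. `k(·, μ) = K μ` and `f(μ) = ⟪f, K μ⟫`. -/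
theorem stmt6 {P H : Type*} [NormedAddCommGroup H] [InnerProductSpace ℝ H] [CompleteSpace H]
    (K : P → H) (e : H →ₗ[ℝ] (P → ℝ))
    (hrepr : ∀ (f : H) (p : P), e f p = ⟪f, K p⟫)
    (N : ℕ) (μ : Fin N → P) (y : Fin N → ℝ) (lam : ℝ) (hlam : 0 < lam)
    (L : H → ℝ)
    (hL : ∀ f, L f = (1/(N:ℝ)) * ∑ i, (y i - e f (μ i))^2 + lam * ‖f‖^2)
    (fstar : H) (hmin : ∀ g, L fstar ≤ L g) :
    fstar ∈ Submodule.span ℝ (Set.range fun i => K (μ i)) := by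
  set S : Submodule ℝ H := Submodule.span ℝ (Set.range fun i => K (μ i)) with hS
  haveI : FiniteDimensional ℝ S :=
    FiniteDimensional.span_of_finite ℝ (Set.finite_range _)
  set g : H := (S.orthogonalProjection fstar : H) with hg
  set v : H := fstar - g with hv
  have hvS : v ∈ Sᗮ := S.sub_starProjection_mem_orthogonal fstar
  have hgS : g ∈ S := (S.orthogonalProjection fstar).2
  have hfg : fstar = g + v := by rw [hv]; abel
  -- inner products with the kernel translates agree
  have heval : ∀ i, e fstar (μ i) = e g (μ i) := by
    intro i
    have hK : K (μ i) ∈ S := Submodule.subset_span ⟨i, rfl⟩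
    have hzero : ⟪v, K (μ i)⟫ = 0 := by rw [real_inner_comm]; exact hvS _ hK
    rw [hrepr, hrepr, hfg, inner_add_left, hzero, add_zero]
  -- norm decomposition
  have hortho : ⟪g, v⟫ = 0 := hvS g hgS
  have hnorm : ‖fstar‖^2 = ‖g‖^2 + ‖v‖^2 := by
    rw [hfg, norm_add_sq_real, hortho]; ring
  have hle := hmin g
  rw [hL fstar, hL g] at hle
  have hsum : (∑ i, (y i - e fstar (μ i))^2) = ∑ i, (y i - e g (μ i))^2 := by
    exact Finset.sum_congr rfl fun i _ => by rw [heval i]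
  rw [hsum, hnorm] at hle
  have hv2 : lam * ‖v‖^2 ≤ 0 := by nlinarith
  have hvz : v = 0 := by
    have h1 : ‖v‖^2 ≤ 0 := by nlinarith
    have h2 : ‖v‖ = 0 := by nlinarith [norm_nonneg v]
    exact norm_eq_zero.mp h2
  rw [hfg, hvz, add_zero]; exact hgS
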